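/- Let 0 ≤ λ < 1 and let a, b, r be real numbers with 0 < r < a < b. Then for every complex number z with |z| ≤ r, the inequality |z/(a - z) − λ·z/(b − z)| ≤ |z|/(a − |z|) − λ·|z|/(b − |z|) holds. -/

import Mathlib

private lemma geom' {K : Type*} [NormedField K] [CompleteSpace K] (w : K)
    (hw : ‖w‖ < 1) : HasSum (fun n => w ^ (n + 1)) (w * (1 - w)⁻¹) := by
  simpa [pow_succ, mul_comm] using (hasSum_geometric_of_norm_lt_one hw).mul_left w

theorem stmt_0 (lam a b r : ℝ) (hlam0 : 0 ≤ lam) (hlam1 : lam < 1)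
    (hr : 0 < r) (hra : r < a) (hab : a < b) (z : ℂ) (hz : ‖z‖ ≤ r) :
    ‖z / ((a : ℂ) - z) - (lam : ℂ) * z / ((b : ℂ) - z)‖ ≤
      ‖z‖ / (a - ‖z‖) - lam * ‖z‖ / (b - ‖z‖) := by
  have ha0 : (0:ℝ) < a := hr.trans hra
  have hb0 : (0:ℝ) < b := ha0.trans hab
  have ha : (a:ℂ) ≠ 0 := by exact_mod_cast ha0.ne'
  have hb : (b:ℂ) ≠ 0 := by exact_mod_cast hb0.ne'
  set x := ‖z‖ with hxdef
  have hx0 : 0 ≤ x := norm_nonneg z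
  have hxa : x < a := lt_of_le_of_lt hz hra
  have hxb : x < b := hxa.trans hab
  have haz : (a:ℂ) - z ≠ 0 := by
    intro h
    have hz' : z = (a:ℂ) := by linear_combination -h
    have : x = a := by rw [hxdef, hz']; simp [abs_of_pos ha0]
    linarith
  have hbz : (b:ℂ) - z ≠ 0 := by
    intro h
    have hz' : z = (b:ℂ) := by linear_combination -h
    have : x = b := by rw [hxdef, hz']; simp [abs_of_pos hb0]
    linarith
  have hwa : ‖z / (a:ℂ)‖ < 1 := by
    rw [norm_div, Complex.norm_real, Real.norm_eq_abs, abs_of_pos ha0]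
    exact (div_lt_one ha0).mpr hxa
  have hwb : ‖z / (b:ℂ)‖ < 1 := by
    rw [norm_div, Complex.norm_real, Real.norm_eq_abs, abs_of_pos hb0]
    exact (div_lt_one hb0).mpr hxb
  have hua : ‖x / a‖ < 1 := by
    rw [Real.norm_eq_abs, abs_of_nonneg (div_nonneg hx0 ha0.le)]
    exact (div_lt_one ha0).mpr hxa
  have hub : ‖x / b‖ < 1 := by
    rw [Real.norm_eq_abs, abs_of_nonneg (div_nonneg hx0 hb0.le)]
    exact (div_lt_one hb0).mpr hxb
  -- the complex series
  set f : ℕ → ℂ := fun n => ((a⁻¹ ^ (n+1) - lam * b⁻¹ ^ (n+1) : ℝ) : ℂ) * z ^ (n+1) with hf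
  have hcnn : ∀ n : ℕ, 0 ≤ a⁻¹ ^ (n+1) - lam * b⁻¹ ^ (n+1) := by
    intro n
    have h1 : lam * b⁻¹ ^ (n+1) ≤ 1 * b⁻¹ ^ (n+1) :=
      mul_le_mul_of_nonneg_right hlam1.le (pow_nonneg (inv_nonneg.mpr hb0.le) _)
    have h2 : b⁻¹ ^ (n+1) ≤ a⁻¹ ^ (n+1) :=
      pow_le_pow_left₀ (inv_nonneg.mpr hb0.le) (by
        rw [inv_le_inv₀ hb0 ha0]; exact hab.le) _
    nlinarith
  have hsumC : HasSum f (z / ((a : ℂ) - z) - (lam : ℂ) * z / ((b : ℂ) - z)) := by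
    have h1 := geom' (z / (a:ℂ)) hwa
    have h2 := (geom' (z / (b:ℂ)) hwb).mul_left (lam : ℂ)
    have h := h1.sub h2
    have heq : (fun n => (z / (a:ℂ)) ^ (n+1) - (lam:ℂ) * (z / (b:ℂ)) ^ (n+1)) = f := by
      funext n
      rw [hf]
      push_cast
      rw [div_pow, div_pow]
      simp only [inv_pow]
      field_simp
    rw [heq] at h
    convert h using 1
    · rfl
    have h1a : (1 : ℂ) - z / a = ((a:ℂ) - z) / a := by field_simp
    have h1b : (1 : ℂ) - z / b = ((b:ℂ) - z) / b := by field_simp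
    rw [h1a, h1b]
    field_simp
  -- the real series
  set g : ℕ → ℝ := fun n => (a⁻¹ ^ (n+1) - lam * b⁻¹ ^ (n+1)) * x ^ (n+1) with hg
  have hsumR : HasSum g (x / (a - x) - lam * x / (b - x)) := by
    have h1 := geom' (x / a) hua
    have h2 := (geom' (x / b) hub).mul_left lam
    have h := h1.sub h2
    have heq : (fun n => (x / a) ^ (n+1) - lam * (x / b) ^ (n+1)) = g := by
      funext n
      rw [hg]
      rw [div_pow, div_pow]
      simp only [inv_pow]
      field_simp
    rw [heq] at h
    convert h using 1
    · rfl
    have h1a : (1 : ℝ) - x / a = (a - x) / a := by field_simp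
    have h1b : (1 : ℝ) - x / b = (b - x) / b := by field_simp
    have hax : a - x ≠ 0 := by linarith
    have hbx : b - x ≠ 0 := by linarith
    rw [h1a, h1b]
    field_simp
  have hnorm : ∀ n, ‖f n‖ = g n := by
    intro n
    rw [hf, hg]
    simp only [norm_mul, Complex.norm_real, Real.norm_eq_abs, norm_pow]
    rw [abs_of_nonneg (hcnn n)]
  rw [← hsumC.tsum_eq, ← hsumR.tsum_eq]
  calc ‖∑' n, f n‖ ≤ ∑' n, ‖f n‖ := by
        apply norm_tsum_le_tsum_norm
        have : (fun n => ‖f n‖) = g := funext hnorm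
        rw [this]; exact hsumR.summable
    _ = ∑' n, g n := by exact tsum_congr hnorm
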